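/- Let μ > 0, T > 0, and ω(t) = √(1+2μt)·ω where ω = [−1,1] ∪ ⋃_{n≥1}((n²,n²+n) ∪ (−n²−n,−n²)) ⊂ ℝ. Then there exist r > 0 and δ > 0 such that for all x ∈ ℝ, ∫₀^T λ((x−r, x+r) ∩ ω(t)) dt ≥ δ, even though for each fixed t ∈ [0,T] the set ω(t) is not thick in ℝ. -/

import Mathlib

open MeasureTheory

/-- A measurable set `S ⊆ ℝ` is thick. -/
def IsThick1 (S : Set ℝ) : Prop :=
  ∃ δ₀ L : ℝ, 0 < δ₀ ∧ δ₀ ≤ 1 ∧ 0 < L ∧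
    ∀ x : ℝ, ENNReal.ofReal (δ₀ * L) ≤ volume (S ∩ Set.Icc x (x + L))

private lemma tele_sum (g : ℕ → ℝ) : ∀ {a b : ℕ}, a ≤ b →
    ∑ n ∈ Finset.Ico a b, (g n - g (n + 1)) = g a - g b := by
  intro a b h
  induction b with
  | zero => interval_cases a; simp
  | succ b ih =>
    rcases Nat.lt_or_ge a (b + 1) with h' | h'
    · have hab : a ≤ b := Nat.lt_succ_iff.mp h'
      rw [Finset.sum_Ico_succ_top hab, ih hab]; ring
    · have : a = b + 1 := le_antisymm h h'
      subst this; simp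

private lemma omega_def_neg (ω : Set ℝ)
    (hω : ω = Set.Icc (-1 : ℝ) 1 ∪
      ⋃ n : ℕ, ⋃ (_ : 1 ≤ n),
        (Set.Ioo ((n : ℝ) ^ 2) ((n : ℝ) ^ 2 + n) ∪
          Set.Ioo (-(n : ℝ) ^ 2 - n) (-(n : ℝ) ^ 2))) :
    ∀ z : ℝ, z ∈ ω → -z ∈ ω := by
  intro z hz
  rw [hω] at hz ⊢
  rcases hz with h | h
  · left
    simp only [Set.mem_Icc] at h ⊢
    constructor <;> linarith [h.1, h.2]
  · right
    simp only [Set.mem_iUnion] at h ⊢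
    obtain ⟨n, hn, h⟩ := h
    refine ⟨n, hn, ?_⟩
    rcases h with h | h
    · right; simp only [Set.mem_Ioo] at h ⊢; constructor <;> linarith [h.1, h.2]
    · left; simp only [Set.mem_Ioo] at h ⊢; constructor <;> linarith [h.1, h.2]

/-- Core estimate: for `y` large positive, the set of times `t ∈ (0,T]` with
`y / √(1+2μt) ∈ ω` has measure at least `T/4`. -/
private lemma amgm_div (μ p q : ℝ) (hμ : 0 < μ) :
    p ^ 2 / (4 * μ) - q ^ 2 / (4 * μ) ≤ (p ^ 2 - 1) / (2 * μ) - (p * q - 1) / (2 * μ) := by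
  rw [div_sub_div_same, div_sub_div_same, div_le_div_iff₀ (by linarith) (by linarith)]
  nlinarith [mul_nonneg (sq_nonneg (p - q)) hμ.le]

set_option maxHeartbeats 1000000 in
private lemma core_estimate (μ T : ℝ) (hμ : 0 < μ) (hT : 0 < T) (ω : Set ℝ)
    (hω : ω = Set.Icc (-1 : ℝ) 1 ∪
      ⋃ n : ℕ, ⋃ (_ : 1 ≤ n),
        (Set.Ioo ((n : ℝ) ^ 2) ((n : ℝ) ^ 2 + n) ∪
          Set.Ioo (-(n : ℝ) ^ 2 - n) (-(n : ℝ) ^ 2))) :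
    ∃ Y₀ : ℝ, 1 ≤ Y₀ ∧ ∀ y : ℝ, Y₀ ≤ y →
      ENNReal.ofReal (T / 4) ≤
        volume {t : ℝ | t ∈ Set.Ioc 0 T ∧ y / Real.sqrt (1 + 2 * μ * t) ∈ ω} := by
  have hCT : 0 < 1 + 2 * μ * T := by nlinarith
  set C := Real.sqrt (1 + 2 * μ * T) with hCdef
  have hC2 : C ^ 2 = 1 + 2 * μ * T := Real.sq_sqrt hCT.le
  have hC1 : 1 < C := by
    rw [hCdef]
    exact (Real.lt_sqrt (by norm_num)).mpr (by nlinarith)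
  have hC0 : 0 < C := by linarith
  set rtC := Real.sqrt C with hrtCdef
  have hrtC0 : 0 < rtC := Real.sqrt_pos.mpr hC0
  have hrtC2 : rtC ^ 2 = C := Real.sq_sqrt hC0.le
  -- limit of the lower bound function
  have hlim : Filter.Tendsto
      (fun s : ℝ => s ^ 4 / (s / rtC + 1) ^ 4 - s ^ 4 / (s - 1) ^ 4)
      Filter.atTop (nhds (C ^ 2 - 1)) := by
    have ha : Filter.Tendsto (fun s : ℝ => 1 / rtC + s⁻¹) Filter.atTop
        (nhds (1 / rtC + 0)) := tendsto_const_nhds.add tendsto_inv_atTop_zero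
    have hb : Filter.Tendsto (fun s : ℝ => ((1 / rtC + s⁻¹)⁻¹) ^ 4) Filter.atTop
        (nhds (((1 / rtC + 0)⁻¹) ^ 4)) := (ha.inv₀ (by positivity)).pow 4
    have hc : Filter.Tendsto (fun s : ℝ => ((1 - s⁻¹)⁻¹) ^ 4) Filter.atTop
        (nhds (((1 - (0:ℝ))⁻¹) ^ 4)) :=
      ((tendsto_const_nhds.sub tendsto_inv_atTop_zero).inv₀ (by norm_num)).pow 4
    have hd := hb.sub hc
    have heq : ((1 / rtC + 0)⁻¹) ^ 4 - ((1 - (0:ℝ))⁻¹) ^ 4 = C ^ 2 - 1 := by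
      rw [add_zero, one_div, inv_inv]
      have : rtC ^ 4 = C ^ 2 := by rw [show (4:ℕ) = 2*2 from rfl, pow_mul, hrtC2]
      rw [this]; norm_num
    rw [heq] at hd
    apply hd.congr'
    filter_upwards [Filter.eventually_ge_atTop (2:ℝ)] with s hs
    have hs0 : (0:ℝ) < s := by linarith
    have h1 : (0:ℝ) < s / rtC + 1 := by positivity
    have h2 : (0:ℝ) < s - 1 := by linarith
    rw [show s ^ 4 / (s / rtC + 1) ^ 4 = (s / (s / rtC + 1)) ^ 4 by rw [div_pow],
        show s ^ 4 / (s - 1) ^ 4 = (s / (s - 1)) ^ 4 by rw [div_pow]]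
    have e1 : (1 / rtC + s⁻¹)⁻¹ = s / (s / rtC + 1) := by
      rw [eq_div_iff h1.ne']
      field_simp
    have e2 : (1 - s⁻¹)⁻¹ = s / (s - 1) := by
      rw [eq_div_iff h2.ne']
      field_simp
    rw [e1, e2]
  have hgt : ∀ᶠ s in Filter.atTop,
      μ * T < s ^ 4 / (s / rtC + 1) ^ 4 - s ^ 4 / (s - 1) ^ 4 :=
    hlim.eventually (eventually_gt_nhds (by nlinarith))
  obtain ⟨s₀, hs₀⟩ := Filter.eventually_atTop.mp hgt
  refine ⟨max (s₀ ^ 2) 4, le_trans (by norm_num) (le_max_right _ _), ?_⟩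
  intro y hy
  have hy4 : (4:ℝ) ≤ y := le_trans (le_max_right _ _) hy
  have hy0 : 0 < y := by linarith
  set s := Real.sqrt y with hsdef
  have hsy : s ^ 2 = y := Real.sq_sqrt hy0.le
  have hs2 : 2 ≤ s := by
    rw [hsdef]
    exact (Real.le_sqrt (by norm_num) hy0.le).mpr (by nlinarith)
  have hss₀ : s₀ ≤ s := by
    have h1 : s₀ ^ 2 ≤ y := le_trans (le_max_left _ _) hy
    calc s₀ ≤ |s₀| := le_abs_self _
    _ = Real.sqrt (s₀ ^ 2) := (Real.sqrt_sq_eq_abs _).symm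
    _ ≤ s := Real.sqrt_le_sqrt h1
  have hfs := hs₀ s hss₀
  set u := Real.sqrt (y / C) with hudef
  have hu : u = s / rtC := by rw [hudef, Real.sqrt_div hy0.le]
  have hu0 : 0 < u := Real.sqrt_pos.mpr (by positivity)
  have hu2 : u ^ 2 = y / C := Real.sq_sqrt (by positivity)
  set N₁ := ⌈u⌉₊ with hN₁def
  set M := ⌊s⌋₊ with hMdef
  have hN₁1 : 1 ≤ N₁ := Nat.one_le_iff_ne_zero.mpr (by
    simp only [hN₁def, ne_eq, Nat.ceil_eq_zero, not_le]; exact hu0)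
  have hN₁u : (N₁ : ℝ) < u + 1 := Nat.ceil_lt_add_one hu0.le
  have huN₁ : u ≤ (N₁ : ℝ) := Nat.le_ceil u
  have hM2 : 2 ≤ M := Nat.le_floor (by exact_mod_cast hs2)
  have hMs : (M : ℝ) ≤ s := Nat.floor_le (by positivity)
  have hsM : s - 1 < (M : ℝ) := by have := Nat.lt_floor_add_one s; linarith
  have hN₁pos : (0:ℝ) < (N₁ : ℝ) := by exact_mod_cast hN₁1
  have hMpos : (0:ℝ) < (M : ℝ) := by
    have : (2:ℝ) ≤ (M : ℝ) := by exact_mod_cast hM2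
    linarith
  have hy2s4 : y ^ 2 = s ^ 4 := by rw [← hsy]; ring
  -- real lower bound
  have hkey1 : s ^ 4 / (s / rtC + 1) ^ 4 ≤ y ^ 2 / (N₁ : ℝ) ^ 4 := by
    rw [hy2s4, ← hu]
    exact div_le_div_of_nonneg_left (by positivity) (by positivity)
      (pow_le_pow_left₀ hN₁pos.le hN₁u.le 4)
  have hkey2 : y ^ 2 / (M : ℝ) ^ 4 ≤ s ^ 4 / (s - 1) ^ 4 := by
    rw [hy2s4]
    have hs1 : (0:ℝ) < s - 1 := by linarith
    exact div_le_div_of_nonneg_left (by positivity) (by positivity)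
      (pow_le_pow_left₀ hs1.le hsM.le 4)
  have hreal : μ * T ≤ y ^ 2 / (N₁ : ℝ) ^ 4 - y ^ 2 / (M : ℝ) ^ 4 := by linarith
  have hN₁M : N₁ < M := by
    by_contra hcon
    push_neg at hcon
    have h1 : (M : ℝ) ≤ (N₁ : ℝ) := by exact_mod_cast hcon
    have h2 : y ^ 2 / (N₁ : ℝ) ^ 4 ≤ y ^ 2 / (M : ℝ) ^ 4 :=
      div_le_div_of_nonneg_left (by positivity) (by positivity)
        (pow_le_pow_left₀ hMpos.le h1 4)
    nlinarith only [hreal, h2, hμ, hT, mul_pos hμ hT]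
  -- the time intervals
  set I : ℕ → Set ℝ := fun n =>
    Set.Ioo (((y / ((n:ℝ) ^ 2 + n)) ^ 2 - 1) / (2 * μ))
            (((y / (n:ℝ) ^ 2) ^ 2 - 1) / (2 * μ)) with hIdef
  set g : ℕ → ℝ := fun n => (y / (n:ℝ) ^ 2) ^ 2 / (4 * μ) with hgdef
  -- basic facts for n in range
  have hn_facts : ∀ n ∈ Finset.Ico N₁ M,
      (1:ℝ) ≤ (n:ℝ) ∧ y / C ≤ (n:ℝ) ^ 2 ∧ (n:ℝ) ^ 2 + n ≤ y := by
    intro n hn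
    obtain ⟨hn1, hn2⟩ := Finset.mem_Ico.mp hn
    have hnn1 : (1:ℝ) ≤ (n:ℝ) := by exact_mod_cast le_trans hN₁1 hn1
    have hN₁n : (N₁ : ℝ) ≤ (n:ℝ) := by exact_mod_cast hn1
    refine ⟨hnn1, ?_, ?_⟩
    · have h1 : u ≤ (n:ℝ) := le_trans huN₁ hN₁n
      nlinarith only [h1, hu2, hu0]
    · have h1 : (n:ℝ) + 1 ≤ (M:ℝ) := by exact_mod_cast hn2
      have h2 : (n:ℝ) ≤ s - 1 := by linarith only [h1, hMs]
      nlinarith only [h2, hsy, hs2, hnn1]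
  -- each time interval is contained in the target set
  have hsub : ∀ n ∈ Finset.Ico N₁ M, I n ⊆
      {t : ℝ | t ∈ Set.Ioc 0 T ∧ y / Real.sqrt (1 + 2 * μ * t) ∈ ω} := by
    intro n hn t ht
    obtain ⟨hnn1, hnC, hny⟩ := hn_facts n hn
    simp only [hIdef, Set.mem_Ioo] at ht
    obtain ⟨htl, htu⟩ := ht
    have hden1 : (0:ℝ) < (n:ℝ) ^ 2 + n := by positivity
    have hden2 : (0:ℝ) < (n:ℝ) ^ 2 := by positivity
    have ha1 : 1 ≤ y / ((n:ℝ) ^ 2 + n) := (one_le_div hden1).mpr hny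
    have hbC : y / (n:ℝ) ^ 2 ≤ C := by
      rw [div_le_iff₀ hden2]
      have h1 := (div_le_iff₀ hC0).mp hnC
      nlinarith only [h1]
    have hb0 : 0 < y / (n:ℝ) ^ 2 := by positivity
    have h2μ : (0:ℝ) < 2 * μ := by linarith
    rw [div_lt_iff₀ h2μ] at htl
    rw [lt_div_iff₀ h2μ] at htu
    have ht0 : 0 < t := by nlinarith only [htl, ha1, h2μ, hμ]
    have htT : t ≤ T := by
      have hb2 : (y / (n:ℝ) ^ 2) ^ 2 ≤ C ^ 2 := by nlinarith only [hbC, hb0]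
      rw [hC2] at hb2
      nlinarith only [hb2, htu, hμ, hT]
    have hc0 : (0:ℝ) < 1 + 2 * μ * t := by nlinarith only [ht0, hμ]
    have hclb : y / ((n:ℝ) ^ 2 + n) < Real.sqrt (1 + 2 * μ * t) := by
      apply (Real.lt_sqrt (by positivity)).mpr
      nlinarith only [htl]
    have hcub : Real.sqrt (1 + 2 * μ * t) < y / (n:ℝ) ^ 2 := by
      apply (Real.sqrt_lt' hb0).mpr
      nlinarith only [htu]
    have hcpos : (0:ℝ) < Real.sqrt (1 + 2 * μ * t) := by linarith only [ha1, hclb]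
    refine ⟨⟨ht0, htT⟩, ?_⟩
    have h1 : (n:ℝ) ^ 2 < y / Real.sqrt (1 + 2 * μ * t) := by
      rw [lt_div_iff₀ hcpos]
      have hmul := (lt_div_iff₀ hden2).mp hcub
      nlinarith only [hmul]
    have h2 : y / Real.sqrt (1 + 2 * μ * t) < (n:ℝ) ^ 2 + n := by
      rw [div_lt_iff₀ hcpos]
      have hmul := (div_lt_iff₀ hden1).mp hclb
      nlinarith only [hmul]
    rw [hω]
    right
    simp only [Set.mem_iUnion]
    have hn1nat : 1 ≤ n := le_trans hN₁1 (Finset.mem_Ico.mp hn).1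
    exact ⟨n, hn1nat, Or.inl ⟨h1, h2⟩⟩
  -- the time intervals are pairwise disjoint
  have hdisj : (↑(Finset.Ico N₁ M) : Set ℕ).PairwiseDisjoint I := by
    have key : ∀ m ∈ Finset.Ico N₁ M, ∀ n ∈ Finset.Ico N₁ M, m < n → Disjoint (I m) (I n) := by
      intro m hm n hn hmn
      obtain ⟨hmm1, -, -⟩ := hn_facts m hm
      obtain ⟨hnn1, -, -⟩ := hn_facts n hn
      have hmn' : (m:ℝ) + 1 ≤ (n:ℝ) := by exact_mod_cast hmn
      have hle : (m:ℝ) ^ 2 + m ≤ (n:ℝ) ^ 2 := by nlinarith only [hmn', hmm1]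
      have hdm : (0:ℝ) < (m:ℝ) ^ 2 + m := by positivity
      have hdn : (0:ℝ) < (n:ℝ) ^ 2 := by positivity
      have h2 : y / (n:ℝ) ^ 2 ≤ y / ((m:ℝ) ^ 2 + m) :=
        div_le_div_of_nonneg_left hy0.le hdm hle
      have h2' : 0 < y / (n:ℝ) ^ 2 := by positivity
      have hkey : ((y / (n:ℝ) ^ 2) ^ 2 - 1) / (2 * μ) ≤
          ((y / ((m:ℝ) ^ 2 + m)) ^ 2 - 1) / (2 * μ) := by
        apply (div_le_div_iff_of_pos_right (by linarith : (0:ℝ) < 2 * μ)).mpr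
        nlinarith only [h2, h2']
      apply Set.disjoint_left.mpr
      intro t htm htn
      simp only [hIdef, Set.mem_Ioo] at htm htn
      linarith [htm.1, htn.2]
    intro m hm n hn hmn
    rcases lt_or_gt_of_ne hmn with h | h
    · exact key m hm n hn h
    · exact (key n hn m hm h).symm
  -- length of each interval dominates the telescoping term
  have hlen : ∀ n ∈ Finset.Ico N₁ M, g n - g (n + 1) ≤
      ((y / (n:ℝ) ^ 2) ^ 2 - 1) / (2 * μ) - ((y / ((n:ℝ) ^ 2 + n)) ^ 2 - 1) / (2 * μ) := by
    intro n hn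
    obtain ⟨hnn1, -, -⟩ := hn_facts n hn
    have hcast : ((n + 1 : ℕ) : ℝ) = (n:ℝ) + 1 := by push_cast; ring
    have hw : (y / ((n:ℝ) ^ 2 + n)) ^ 2 = (y / (n:ℝ) ^ 2) * (y / ((n:ℝ) + 1) ^ 2) := by
      rw [div_mul_div_comm, div_pow]
      congr 1 <;> ring
    simp only [hgdef, hcast]
    rw [hw]
    exact amgm_div μ (y / (n:ℝ) ^ 2) (y / ((n:ℝ) + 1) ^ 2) hμ
  have hg_nonneg : ∀ n ∈ Finset.Ico N₁ M, 0 ≤ g n - g (n + 1) := by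
    intro n hn
    obtain ⟨hnn1, -, -⟩ := hn_facts n hn
    have hcast : ((n + 1 : ℕ) : ℝ) = (n:ℝ) + 1 := by push_cast; ring
    simp only [hgdef, hcast]
    have h1 : y / ((n:ℝ) + 1) ^ 2 ≤ y / (n:ℝ) ^ 2 :=
      div_le_div_of_nonneg_left hy0.le (by positivity) (by nlinarith only [hnn1])
    have h2 : 0 ≤ y / ((n:ℝ) + 1) ^ 2 := by positivity
    have h3 : (y / ((n:ℝ) + 1) ^ 2) ^ 2 ≤ (y / (n:ℝ) ^ 2) ^ 2 := pow_le_pow_left₀ h2 h1 2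
    have h4 : (0:ℝ) < 4 * μ := by linarith
    have h5 : (y / ((n:ℝ) + 1) ^ 2) ^ 2 / (4 * μ) ≤ (y / (n:ℝ) ^ 2) ^ 2 / (4 * μ) :=
      (div_le_div_iff_of_pos_right h4).mpr h3
    linarith
  -- telescoping bound
  have hTsum : T / 4 ≤ ∑ n ∈ Finset.Ico N₁ M, (g n - g (n + 1)) := by
    rw [tele_sum g hN₁M.le]
    have e1 : (y / (N₁:ℝ) ^ 2) ^ 2 = y ^ 2 / (N₁:ℝ) ^ 4 := by
      rw [div_pow, ← pow_mul]
    have e2 : (y / (M:ℝ) ^ 2) ^ 2 = y ^ 2 / (M:ℝ) ^ 4 := by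
      rw [div_pow, ← pow_mul]
    simp only [hgdef]
    rw [div_sub_div_same, e1, e2, le_div_iff₀ (by linarith : (0:ℝ) < 4 * μ)]
    nlinarith only [hreal]
  -- put everything together
  calc ENNReal.ofReal (T / 4)
      ≤ ENNReal.ofReal (∑ n ∈ Finset.Ico N₁ M, (g n - g (n + 1))) :=
        ENNReal.ofReal_le_ofReal hTsum
    _ = ∑ n ∈ Finset.Ico N₁ M, ENNReal.ofReal (g n - g (n + 1)) :=
        ENNReal.ofReal_sum_of_nonneg hg_nonneg
    _ ≤ ∑ n ∈ Finset.Ico N₁ M, volume (I n) := by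
        apply Finset.sum_le_sum
        intro n hn
        rw [hIdef]
        rw [Real.volume_Ioo]
        exact ENNReal.ofReal_le_ofReal (hlen n hn)
    _ = volume (⋃ n ∈ Finset.Ico N₁ M, I n) :=
        (measure_biUnion_finset hdisj (fun n _ => measurableSet_Ioo)).symm
    _ ≤ volume {t : ℝ | t ∈ Set.Ioc 0 T ∧ y / Real.sqrt (1 + 2 * μ * t) ∈ ω} :=
        measure_mono (Set.iUnion₂_subset hsub)

set_option maxHeartbeats 1000000 in
/-- Proposition 2.5: the moving supports `ω(t) = √(1+2μt)·ω` satisfy the integral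
thickness condition on `[0,T]` although no `ω(t)` is thick in `ℝ`. -/
theorem dilation_integral_thickness (μ T : ℝ) (hμ : 0 < μ) (hT : 0 < T)
    (ω : Set ℝ)
    (hω : ω = Set.Icc (-1 : ℝ) 1 ∪
      ⋃ n : ℕ, ⋃ (_ : 1 ≤ n),
        (Set.Ioo ((n : ℝ) ^ 2) ((n : ℝ) ^ 2 + n) ∪
          Set.Ioo (-(n : ℝ) ^ 2 - n) (-(n : ℝ) ^ 2)))
    (ωt : ℝ → Set ℝ)
    (hωt : ∀ t : ℝ, ωt t = (fun y => Real.sqrt (1 + 2 * μ * t) * y) '' ω) :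
    (∃ r δ : ℝ, 0 < r ∧ 0 < δ ∧
      ∀ x : ℝ, δ ≤
        ∫ t in Set.Ioc (0 : ℝ) T, (volume (Set.Ioo (x - r) (x + r) ∩ ωt t)).toReal) ∧
    ∀ t ∈ Set.Icc (0 : ℝ) T, ¬ IsThick1 (ωt t) := by
  constructor
  · -- integral thickness
    obtain ⟨Y₀, hY₀1, hcore⟩ := core_estimate μ T hμ hT ω hω
    have hωmeas : MeasurableSet ω := by
      rw [hω]
      exact measurableSet_Icc.union (MeasurableSet.iUnion fun n =>
        MeasurableSet.iUnion fun _ => measurableSet_Ioo.union measurableSet_Ioo)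
    set W : Set (ℝ × ℝ) := {p | p.2 / Real.sqrt (1 + 2 * μ * p.1) ∈ ω} with hWdef
    have hWmeas : MeasurableSet W := by
      have hf : Measurable fun p : ℝ × ℝ => p.2 / Real.sqrt (1 + 2 * μ * p.1) := by
        apply Measurable.div measurable_snd
        exact (Real.continuous_sqrt.comp
          (continuous_const.add (continuous_const.mul continuous_fst))).measurable
      exact hf hωmeas
    set r : ℝ := Y₀ + 1 with hrdef
    refine ⟨r, T / 4, by linarith, by linarith, ?_⟩
    intro x
    have hωt_slice : ∀ t ∈ Set.Ioc (0:ℝ) T, ωt t = {y : ℝ | (t, y) ∈ W} := by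
      intro t ht
      have hc0 : 0 < Real.sqrt (1 + 2 * μ * t) :=
        Real.sqrt_pos.mpr (by nlinarith [ht.1])
      rw [hωt t]
      ext y
      constructor
      · rintro ⟨z, hz, rfl⟩
        simp only [hWdef, Set.mem_setOf_eq]
        rwa [mul_div_cancel_left₀ _ hc0.ne']
      · intro hy
        refine ⟨y / Real.sqrt (1 + 2 * μ * t), hy, ?_⟩
        field_simp
    set J : Set ℝ := if 0 ≤ x then Set.Ioo (x + Y₀) (x + Y₀ + 1)
      else Set.Ioo (x - Y₀ - 1) (x - Y₀) with hJdef
    have hJmeas : MeasurableSet J := by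
      rw [hJdef]; split_ifs <;> exact measurableSet_Ioo
    have hJsub : J ⊆ Set.Ioo (x - r) (x + r) := by
      rw [hJdef, hrdef]
      split_ifs with hx <;> intro y hy <;> simp only [Set.mem_Ioo] at hy ⊢ <;>
        constructor <;> linarith [hy.1, hy.2, hY₀1]
    have hJvol : volume J = 1 := by
      rw [hJdef]
      split_ifs <;> rw [Real.volume_Ioo] <;> norm_num
    have hJfar : ∀ y ∈ J, Y₀ ≤ y ∨ Y₀ ≤ -y := by
      rw [hJdef]
      split_ifs with hx <;> intro y hy <;> simp only [Set.mem_Ioo] at hy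
      · left; linarith [hy.1]
      · right; push_neg at hx; linarith [hy.2]
    have hslice : ∀ y ∈ J, ENNReal.ofReal (T / 4) ≤
        volume ({t : ℝ | (t, y) ∈ W} ∩ Set.Ioc 0 T) := by
      intro y hy
      have hsetEq : ∀ z : ℝ, {t : ℝ | (t, z) ∈ W} ∩ Set.Ioc 0 T =
          {t : ℝ | t ∈ Set.Ioc 0 T ∧ z / Real.sqrt (1 + 2 * μ * t) ∈ ω} := by
        intro z
        ext t
        simp only [hWdef, Set.mem_inter_iff, Set.mem_setOf_eq]
        tauto
      rcases hJfar y hy with h | h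
      · rw [hsetEq y]; exact hcore y h
      · have hWsym : {t : ℝ | (t, y) ∈ W} = {t : ℝ | (t, -y) ∈ W} := by
          ext t
          simp only [hWdef, Set.mem_setOf_eq]
          constructor
          · intro h'
            rw [neg_div]
            exact omega_def_neg ω hω _ h'
          · intro h'
            have h2 := omega_def_neg ω hω _ h'
            rwa [neg_div, neg_neg] at h2
        rw [hWsym, hsetEq (-y)]
        exact hcore (-y) h
    -- the basic measurable family
    set S : Set (ℝ × ℝ) := (Set.univ ×ˢ Set.Ioo (x - r) (x + r)) ∩ W with hSdef
    have hSmeas : MeasurableSet S := (MeasurableSet.univ.prod measurableSet_Ioo).inter hWmeas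
    set G : ℝ → ENNReal := fun t => volume (Prod.mk t ⁻¹' S) with hGdef
    have hGmeas : Measurable G := measurable_measure_prodMk_left hSmeas
    have hpre : ∀ t : ℝ, Prod.mk t ⁻¹' S = Set.Ioo (x - r) (x + r) ∩ {y | (t, y) ∈ W} := by
      intro t
      ext y
      simp only [hSdef, Set.mem_preimage, Set.mem_inter_iff, Set.mem_prod, Set.mem_univ,
        true_and, Set.mem_setOf_eq]
    have hGle : ∀ t, G t ≤ ENNReal.ofReal (2 * r) := by
      intro t
      calc G t ≤ volume (Set.Ioo (x - r) (x + r)) := by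
            rw [hGdef]; exact measure_mono (by rw [hpre t]; exact Set.inter_subset_left)
        _ = ENNReal.ofReal (2 * r) := by rw [Real.volume_Ioo]; ring_nf
    have hcongr : Set.EqOn (fun t => (volume (Set.Ioo (x - r) (x + r) ∩ ωt t)).toReal)
        (fun t => (G t).toReal) (Set.Ioc 0 T) := by
      intro t ht
      show (volume (Set.Ioo (x - r) (x + r) ∩ ωt t)).toReal =
        (volume (Prod.mk t ⁻¹' S)).toReal
      rw [hpre t, hωt_slice t ht]
    rw [setIntegral_congr_fun measurableSet_Ioc hcongr]
    have hlint : ENNReal.ofReal (T / 4) ≤ ∫⁻ t in Set.Ioc (0:ℝ) T, G t := by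
      have huncurry : Function.uncurry
          (fun t y : ℝ => W.indicator (1 : ℝ × ℝ → ENNReal) (t, y)) =
          W.indicator (1 : ℝ × ℝ → ENNReal) := by
        ext p
        rfl
      calc ENNReal.ofReal (T / 4)
          = ENNReal.ofReal (T / 4) * volume J := by rw [hJvol, mul_one]
        _ ≤ ∫⁻ y in J, volume ({t : ℝ | (t, y) ∈ W} ∩ Set.Ioc 0 T) := by
            rw [← setLIntegral_const J (ENNReal.ofReal (T / 4))]
            exact setLIntegral_mono' hJmeas (fun y hy => hslice y hy)
        _ = ∫⁻ y in J, ∫⁻ t in Set.Ioc (0:ℝ) T,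
              W.indicator (1 : ℝ × ℝ → ENNReal) (t, y) := by
            apply lintegral_congr
            intro y
            have hwy : MeasurableSet {t : ℝ | (t, y) ∈ W} :=
              measurable_prodMk_right hWmeas
            have heq : ∀ t : ℝ, W.indicator (1 : ℝ × ℝ → ENNReal) (t, y) =
                {t : ℝ | (t, y) ∈ W}.indicator (1 : ℝ → ENNReal) t := by
              intro t
              rfl
            simp_rw [heq]
            rw [lintegral_indicator_one hwy, Measure.restrict_apply hwy]
        _ = ∫⁻ t in Set.Ioc (0:ℝ) T, ∫⁻ y in J,
              W.indicator (1 : ℝ × ℝ → ENNReal) (t, y) := by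
            rw [← lintegral_lintegral_swap]
            rw [huncurry]
            exact (measurable_const.indicator hWmeas).aemeasurable
        _ = ∫⁻ t in Set.Ioc (0:ℝ) T, volume (J ∩ {y : ℝ | (t, y) ∈ W}) := by
            apply lintegral_congr
            intro t
            have hwt : MeasurableSet {y : ℝ | (t, y) ∈ W} :=
              measurable_prodMk_left hWmeas
            have heq : ∀ y : ℝ, W.indicator (1 : ℝ × ℝ → ENNReal) (t, y) =
                {y : ℝ | (t, y) ∈ W}.indicator (1 : ℝ → ENNReal) y := by
              intro y
              rfl
            simp_rw [heq]
            rw [lintegral_indicator_one hwt, Measure.restrict_apply hwt]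
            rw [Set.inter_comm]
        _ ≤ ∫⁻ t in Set.Ioc (0:ℝ) T, G t := by
            apply lintegral_mono
            intro t
            show volume (J ∩ {y : ℝ | (t, y) ∈ W}) ≤ volume (Prod.mk t ⁻¹' S)
            rw [hpre t]
            exact measure_mono (Set.inter_subset_inter_left _ hJsub)
    have hfin : ∫⁻ t in Set.Ioc (0:ℝ) T, G t ≠ ⊤ := by
      apply ne_of_lt
      calc ∫⁻ t in Set.Ioc (0:ℝ) T, G t
          ≤ ∫⁻ _ in Set.Ioc (0:ℝ) T, ENNReal.ofReal (2 * r) := lintegral_mono hGle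
        _ = ENNReal.ofReal (2 * r) * volume (Set.Ioc (0:ℝ) T) := setLIntegral_const _ _
        _ < ⊤ := by
            rw [Real.volume_Ioc]
            exact ENNReal.mul_lt_top ENNReal.ofReal_lt_top ENNReal.ofReal_lt_top
    rw [integral_toReal (hGmeas.aemeasurable.restrict)
      (ae_of_all _ (fun t => lt_of_le_of_lt (hGle t) ENNReal.ofReal_lt_top))]
    have hmono := ENNReal.toReal_mono hfin hlint
    rwa [ENNReal.toReal_ofReal (by linarith)] at hmono
  · -- no ω(t) is thick
    intro t ht
    rintro ⟨δ₀, L, hδ₀, hδ₀1, hL, hall⟩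
    have h1t : (0:ℝ) < 1 + 2 * μ * t := by nlinarith [ht.1]
    have hc1 : 1 ≤ Real.sqrt (1 + 2 * μ * t) :=
      (Real.le_sqrt (by norm_num) (by nlinarith [ht.1])).mpr (by nlinarith [ht.1])
    set c := Real.sqrt (1 + 2 * μ * t) with hcdef
    have hc0 : (0:ℝ) < c := by linarith
    set n : ℕ := ⌈L⌉₊ + 1 with hndef
    have hn1 : 1 ≤ n := by omega
    have hn1' : (1:ℝ) ≤ (n:ℝ) := by exact_mod_cast hn1
    have hnL : L < (n:ℝ) + 1 := by
      have h := Nat.le_ceil L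
      have h2 : ((⌈L⌉₊ : ℕ) : ℝ) ≤ (n:ℝ) := by
        rw [hndef]; push_cast; linarith
      linarith
    specialize hall (c * ((n:ℝ) ^ 2 + n))
    have hempty : ωt t ∩ Set.Icc (c * ((n:ℝ) ^ 2 + n)) (c * ((n:ℝ) ^ 2 + n) + L) = ∅ := by
      rw [hωt t, ← hcdef]
      apply Set.eq_empty_iff_forall_notMem.mpr
      rintro w ⟨hmem, hicc⟩
      obtain ⟨z, hz, rfl⟩ := hmem
      rw [Set.mem_Icc] at hicc
      obtain ⟨hw1, hw2⟩ := hicc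
      have hw1' : c * ((n:ℝ) ^ 2 + n) ≤ c * z := hw1
      have hw2' : c * z ≤ c * ((n:ℝ) ^ 2 + n) + L := hw2
      have hzlb : (n:ℝ) ^ 2 + n ≤ z := le_of_mul_le_mul_left hw1' hc0
      have hzub : z < ((n:ℝ) + 1) ^ 2 := by
        have h2 : L < c * ((n:ℝ) + 1) := by
          have h4 : 1 * ((n:ℝ) + 1) ≤ c * ((n:ℝ) + 1) :=
            mul_le_mul_of_nonneg_right hc1 (by linarith)
          linarith
        have hring : c * (((n:ℝ) + 1) ^ 2) = c * ((n:ℝ) ^ 2 + n) + c * ((n:ℝ) + 1) := by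
          ring
        have h3 : c * z < c * (((n:ℝ) + 1) ^ 2) := by linarith [hw2', h2, hring]
        exact lt_of_mul_lt_mul_left h3 hc0.le
      rw [hω] at hz
      rcases hz with h | h
      · simp only [Set.mem_Icc] at h
        nlinarith [h.2]
      · simp only [Set.mem_iUnion] at h
        obtain ⟨m, hm, h | h⟩ := h
        · simp only [Set.mem_Ioo] at h
          have hm1 : (1:ℝ) ≤ (m:ℝ) := by exact_mod_cast hm
          rcases le_or_gt m n with hmn | hmn
          · have hmn' : (m:ℝ) ≤ (n:ℝ) := by exact_mod_cast hmn
            nlinarith [h.2]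
          · have hmn' : (n:ℝ) + 1 ≤ (m:ℝ) := by exact_mod_cast hmn
            nlinarith [h.1]
        · simp only [Set.mem_Ioo] at h
          have hm1 : (1:ℝ) ≤ (m:ℝ) := by exact_mod_cast hm
          nlinarith [h.2]
    rw [hempty, measure_empty] at hall
    have h0 : ENNReal.ofReal (δ₀ * L) = 0 := le_antisymm hall zero_le
    rw [ENNReal.ofReal_eq_zero] at h0
    nlinarith
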